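/- Let c₁ < c₂ be real numbers, let g be a real polynomial with ∫_{c₁}^{c₂} g(ξ₁) dξ₁ ≠ 0 and g not identically zero, let k < p be natural numbers, let α : ℕ → ℝ satisfy α_{k+1} ≠ 0, and let f(ξ) = Σ_{m=k+1}^{p} α_m ξ^m. Then, as δ → 0⁺, the Rayleigh-type ratio [∫_{c₁}^{c₂}∫_0^δ ((g′(ξ₁))²(f(ξ₂))² + (g(ξ₁))²(f′(ξ₂))²) dξ₂ dξ₁] / [∫_{c₁}^{c₂}∫_0^δ g(ξ₁)f(ξ₂) dξ₂ dξ₁] is Θ(δ^{k-1}) (exponent taken in ℤ). -/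

import Mathlib

open Topology Asymptotics Polynomial

private lemma aux_isTheta_one {l : Filter ℝ} {h : ℝ → ℝ} {c : ℝ} (hc : c ≠ 0)
    (ht : Filter.Tendsto h l (𝓝 c)) : h =Θ[l] (fun _ => (1 : ℝ)) := by
  constructor
  · exact ht.isBigO_one ℝ
  · have hev : ∀ᶠ x in l, ‖c‖ / 2 < ‖h x‖ := by
      have hn : Filter.Tendsto (fun x => ‖h x‖) l (𝓝 ‖c‖) := ht.norm
      exact hn.eventually (eventually_gt_nhds (by
        have : 0 < ‖c‖ := norm_pos_iff.2 hc
        linarith))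
    refine Asymptotics.IsBigO.of_bound (2 / ‖c‖) ?_
    filter_upwards [hev] with x hx
    have hcpos : 0 < ‖c‖ := norm_pos_iff.2 hc
    have : (1 : ℝ) ≤ (2 / ‖c‖) * ‖h x‖ := by
      rw [div_mul_eq_mul_div, le_div_iff₀ hcpos]
      nlinarith
    simpa using this

private lemma aux_eval_isTheta (q : Polynomial ℝ) (n : ℕ)
    (h0 : ∀ j < n, q.coeff j = 0) (hn : q.coeff n ≠ 0) :
    (fun x : ℝ => q.eval x) =Θ[𝓝[>] (0:ℝ)] (fun x => x ^ n) := by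
  obtain ⟨r, hr⟩ := (Polynomial.X_pow_dvd_iff).2 h0
  have hr0 : r.coeff 0 = q.coeff n := by
    rw [hr]
    simpa using (coeff_X_pow_mul r n 0).symm
  have heq : (fun x : ℝ => q.eval x) = fun x => x ^ n * r.eval x := by
    funext x; rw [hr]; simp
  rw [heq]
  have h1 : (fun x : ℝ => r.eval x) =Θ[𝓝[>] (0:ℝ)] (fun _ => (1 : ℝ)) := by
    refine aux_isTheta_one (c := r.eval 0) ?_ ?_
    · rwa [← Polynomial.coeff_zero_eq_eval_zero, hr0]
    · exact (r.continuous.tendsto 0).mono_left nhdsWithin_le_nhds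
  simpa using (Asymptotics.isTheta_rfl (f := fun x : ℝ => x ^ n)).mul h1

private lemma aux_integral_eval_isTheta (q : Polynomial ℝ) (n : ℕ)
    (h0 : ∀ j < n, q.coeff j = 0) (hn : q.coeff n ≠ 0) :
    (fun δ : ℝ => ∫ x in (0:ℝ)..δ, q.eval x) =Θ[𝓝[>] (0:ℝ)]
      (fun δ => δ ^ (n + 1)) := by
  set d := q.natDegree + 1 with hd
  set Q : Polynomial ℝ := ∑ i ∈ Finset.range d, C (q.coeff i / (i + 1)) * X ^ (i + 1) with hQ
  have hQd : Q.derivative = q := by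
    rw [hQ, derivative_sum]
    have : ∀ i ∈ Finset.range d,
        derivative (C (q.coeff i / (i + 1)) * X ^ (i + 1)) = C (q.coeff i) * X ^ i := by
      intro i _
      rw [derivative_C_mul_X_pow]
      push_cast
      rw [div_mul_cancel₀ _ (show (i:ℝ) + 1 ≠ 0 by positivity)]
    rw [Finset.sum_congr rfl this]
    conv_rhs => rw [q.as_sum_range' d (by omega)]
    exact Finset.sum_congr rfl fun i _ => by rw [C_mul_X_pow_eq_monomial]
  have hQ0 : Q.eval 0 = 0 := by
    simp [hQ, eval_finset_sum]
  have hint : ∀ δ : ℝ, (∫ x in (0:ℝ)..δ, q.eval x) = Q.eval δ := by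
    intro δ
    have h1 : ∀ x ∈ Set.uIcc (0:ℝ) δ, HasDerivAt (fun x => Q.eval x) (q.eval x) x := by
      intro x _
      simpa [hQd] using Q.hasDerivAt x
    have h2 : IntervalIntegrable (fun x => q.eval x) MeasureTheory.volume 0 δ :=
      q.continuous.intervalIntegrable _ _
    rw [intervalIntegral.integral_eq_sub_of_hasDerivAt h1 h2, hQ0, sub_zero]
  simp only [hint]
  have hQc : ∀ j, Q.coeff (j + 1) = if j ∈ Finset.range d then q.coeff j / (j + 1) else 0 := by
    intro j
    rw [hQ, finset_sum_coeff]
    have step : ∀ i ∈ Finset.range d, (C (q.coeff i / (i + 1)) * X ^ (i + 1)).coeff (j + 1)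
        = if i = j then q.coeff i / (i + 1) else 0 := by
      intro i _
      rw [coeff_C_mul, coeff_X_pow]
      by_cases h : i = j
      · simp [h]
      · simp only [h, if_false]
        rw [if_neg (by omega), mul_zero]
    rw [Finset.sum_congr rfl step, Finset.sum_ite_eq' (Finset.range d) j
      (fun i => q.coeff i / (i + 1))]
  have hQ0c : Q.coeff 0 = 0 := by
    rw [hQ, finset_sum_coeff]
    refine Finset.sum_eq_zero fun i _ => ?_
    rw [coeff_C_mul, coeff_X_pow]
    simp
  refine aux_eval_isTheta Q (n + 1) ?_ ?_
  · intro j hj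
    match j with
    | 0 => exact hQ0c
    | j + 1 =>
      rw [hQc]
      have : q.coeff j = 0 := h0 j (by omega)
      simp [this]
  · rw [hQc]
    have hmem : n ∈ Finset.range d := by
      simp only [Finset.mem_range, hd]
      have := q.le_natDegree_of_ne_zero hn
      omega
    rw [if_pos hmem]
    positivity

/-- Configuration (a): for `φ(ξ₁,ξ₂) = g(ξ₁) f(ξ₂)` with `g` a nonzero polynomial
satisfying `∫_{c₁}^{c₂} g ≠ 0`, and `f(ξ) = ∑_{m=k+1}^{p} α_m ξ^m`, `α_{k+1} ≠ 0`,
the Rayleigh-type ratio (squared H¹ seminorm over L¹ norm of `φ` on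
`[c₁,c₂] × [0,δ]`) is `Θ(δ^{k-1})` as `δ → 0⁺`, the exponent taken in `ℤ`. -/
theorem rayleigh_ratio_asymptotics_config_a (c₁ c₂ : ℝ) (hc : c₁ < c₂)
    (g : Polynomial ℝ) (hg₁ : (∫ ξ₁ in c₁..c₂, g.eval ξ₁) ≠ 0) (hg₂ : g ≠ 0)
    (k p : ℕ) (hkp : k < p) (α : ℕ → ℝ) (hα : α (k + 1) ≠ 0) :
    (fun δ : ℝ =>
        (∫ ξ₁ in c₁..c₂, ∫ ξ₂ in (0:ℝ)..δ,
          ((Polynomial.derivative g).eval ξ₁) ^ 2 *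
            (∑ m ∈ Finset.Icc (k + 1) p, α m * ξ₂ ^ m) ^ 2 +
          (g.eval ξ₁) ^ 2 *
            (deriv (fun t : ℝ => ∑ m ∈ Finset.Icc (k + 1) p, α m * t ^ m) ξ₂) ^ 2) /
        (∫ ξ₁ in c₁..c₂, ∫ ξ₂ in (0:ℝ)..δ,
          g.eval ξ₁ * ∑ m ∈ Finset.Icc (k + 1) p, α m * ξ₂ ^ m))
      =Θ[𝓝[>] (0:ℝ)] (fun δ : ℝ => δ ^ ((k : ℤ) - 1)) := by
  set fp : Polynomial ℝ := ∑ m ∈ Finset.Icc (k + 1) p, C (α m) * X ^ m with hfp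
  have hf : ∀ t : ℝ, (∑ m ∈ Finset.Icc (k + 1) p, α m * t ^ m) = fp.eval t := by
    intro t; simp [hfp, eval_finset_sum]
  have hfun : (fun t : ℝ => ∑ m ∈ Finset.Icc (k + 1) p, α m * t ^ m)
      = fun t => fp.eval t := funext hf
  have hf' : ∀ t : ℝ, deriv (fun t : ℝ => ∑ m ∈ Finset.Icc (k + 1) p, α m * t ^ m) t
      = (derivative fp).eval t := by
    intro t; rw [hfun]; exact Polynomial.deriv (p := fp) (x := t)
  set A := ∫ ξ₁ in c₁..c₂, ((derivative g).eval ξ₁) ^ 2 with hA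
  set B := ∫ ξ₁ in c₁..c₂, (g.eval ξ₁) ^ 2 with hB
  set Cg := ∫ ξ₁ in c₁..c₂, g.eval ξ₁ with hCg
  have hBpos : 0 < B := by
    rw [hB]
    rw [intervalIntegral.integral_pos_iff_support_of_nonneg_ae
      (Filter.Eventually.of_forall fun x => sq_nonneg _)
      ((g.continuous.pow 2).intervalIntegrable _ _)]
    refine ⟨hc, ?_⟩
    have hsub : Set.Ioc c₁ c₂ \ {x | g.IsRoot x}
        ⊆ (Function.support fun x : ℝ => (g.eval x) ^ 2) ∩ Set.Ioc c₁ c₂ := by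
      rintro x ⟨hx1, hx2⟩
      refine ⟨?_, hx1⟩
      simp only [Function.mem_support]
      intro hcon
      exact hx2 (by simpa [Polynomial.IsRoot] using pow_eq_zero_iff (n := 2) (by norm_num) |>.1 hcon)
    refine lt_of_lt_of_le ?_ (MeasureTheory.measure_mono hsub)
    rw [MeasureTheory.measure_diff_null
      ((Polynomial.finite_setOf_isRoot hg₂).measure_zero _)]
    rw [Real.volume_Ioc]
    exact ENNReal.ofReal_pos.2 (by linarith)
  set nP : Polynomial ℝ := C A * fp ^ 2 + C B * (derivative fp) ^ 2 with hnP
  set dP : Polynomial ℝ := C Cg * fp with hdP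
  -- pointwise identity
  have key : ∀ δ : ℝ,
      ((∫ ξ₁ in c₁..c₂, ∫ ξ₂ in (0:ℝ)..δ,
          ((Polynomial.derivative g).eval ξ₁) ^ 2 *
            (∑ m ∈ Finset.Icc (k + 1) p, α m * ξ₂ ^ m) ^ 2 +
          (g.eval ξ₁) ^ 2 *
            (deriv (fun t : ℝ => ∑ m ∈ Finset.Icc (k + 1) p, α m * t ^ m) ξ₂) ^ 2) /
        (∫ ξ₁ in c₁..c₂, ∫ ξ₂ in (0:ℝ)..δ,
          g.eval ξ₁ * ∑ m ∈ Finset.Icc (k + 1) p, α m * ξ₂ ^ m))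
      = (∫ x in (0:ℝ)..δ, nP.eval x) / (∫ x in (0:ℝ)..δ, dP.eval x) := by
    intro δ
    have hnum : (∫ ξ₁ in c₁..c₂, ∫ ξ₂ in (0:ℝ)..δ,
          ((Polynomial.derivative g).eval ξ₁) ^ 2 *
            (∑ m ∈ Finset.Icc (k + 1) p, α m * ξ₂ ^ m) ^ 2 +
          (g.eval ξ₁) ^ 2 *
            (deriv (fun t : ℝ => ∑ m ∈ Finset.Icc (k + 1) p, α m * t ^ m) ξ₂) ^ 2)
        = ∫ x in (0:ℝ)..δ, nP.eval x := by
      have inner : ∀ ξ₁ ∈ Set.uIcc c₁ c₂, (∫ ξ₂ in (0:ℝ)..δ,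
          ((Polynomial.derivative g).eval ξ₁) ^ 2 *
            (∑ m ∈ Finset.Icc (k + 1) p, α m * ξ₂ ^ m) ^ 2 +
          (g.eval ξ₁) ^ 2 *
            (deriv (fun t : ℝ => ∑ m ∈ Finset.Icc (k + 1) p, α m * t ^ m) ξ₂) ^ 2)
          = ((derivative g).eval ξ₁) ^ 2 * (∫ x in (0:ℝ)..δ, (fp.eval x) ^ 2)
            + (g.eval ξ₁) ^ 2 * (∫ x in (0:ℝ)..δ, ((derivative fp).eval x) ^ 2) := by
        intro ξ₁ _
        simp only [hf']
        simp only [hf]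
        rw [intervalIntegral.integral_add
          ((show Continuous (fun x : ℝ => eval ξ₁ (derivative g) ^ 2 * eval x fp ^ 2) from
            continuous_const.mul (fp.continuous.pow 2)).intervalIntegrable _ _)
          ((show Continuous (fun x : ℝ => eval ξ₁ g ^ 2 * eval x (derivative fp) ^ 2) from
            continuous_const.mul ((derivative fp).continuous.pow 2)).intervalIntegrable _ _),
          intervalIntegral.integral_const_mul, intervalIntegral.integral_const_mul]
      rw [intervalIntegral.integral_congr inner]
      rw [intervalIntegral.integral_add
        ((show Continuous (fun x : ℝ => eval x (derivative g) ^ 2 *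
            ∫ x in (0:ℝ)..δ, eval x fp ^ 2) from
          ((derivative g).continuous.pow 2).mul continuous_const).intervalIntegrable _ _)
        ((show Continuous (fun x : ℝ => eval x g ^ 2 *
            ∫ x in (0:ℝ)..δ, eval x (derivative fp) ^ 2) from
          (g.continuous.pow 2).mul continuous_const).intervalIntegrable _ _),
        intervalIntegral.integral_mul_const, intervalIntegral.integral_mul_const]
      have hev : ∀ x ∈ Set.uIcc (0:ℝ) δ, nP.eval x
          = A * (fp.eval x) ^ 2 + B * ((derivative fp).eval x) ^ 2 := by
        intro x _; simp [hnP]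
      have i1 : IntervalIntegrable (fun x : ℝ => A * (fp.eval x) ^ 2)
          MeasureTheory.volume 0 δ :=
        (continuous_const.mul (fp.continuous.pow 2)).intervalIntegrable _ _
      have i2 : IntervalIntegrable (fun x : ℝ => B * ((derivative fp).eval x) ^ 2)
          MeasureTheory.volume 0 δ :=
        (continuous_const.mul ((derivative fp).continuous.pow 2)).intervalIntegrable _ _
      rw [intervalIntegral.integral_congr hev, intervalIntegral.integral_add i1 i2,
        intervalIntegral.integral_const_mul, intervalIntegral.integral_const_mul]
    have hden : (∫ ξ₁ in c₁..c₂, ∫ ξ₂ in (0:ℝ)..δ,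
          g.eval ξ₁ * ∑ m ∈ Finset.Icc (k + 1) p, α m * ξ₂ ^ m)
        = ∫ x in (0:ℝ)..δ, dP.eval x := by
      have inner : ∀ ξ₁ ∈ Set.uIcc c₁ c₂, (∫ ξ₂ in (0:ℝ)..δ,
            g.eval ξ₁ * ∑ m ∈ Finset.Icc (k + 1) p, α m * ξ₂ ^ m)
          = g.eval ξ₁ * ∫ x in (0:ℝ)..δ, fp.eval x := by
        intro ξ₁ _
        simp only [hf]
        rw [intervalIntegral.integral_const_mul]
      rw [intervalIntegral.integral_congr inner, intervalIntegral.integral_mul_const]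
      have hev : ∀ x ∈ Set.uIcc (0:ℝ) δ, dP.eval x = Cg * fp.eval x := by
        intro x _; simp [hdP]
      rw [intervalIntegral.integral_congr hev, intervalIntegral.integral_const_mul]
    rw [hnum, hden]
  -- coefficient facts
  have hfpc : ∀ j, fp.coeff j = if j ∈ Finset.Icc (k + 1) p then α j else 0 := by
    intro j
    rw [hfp, finset_sum_coeff]
    have step : ∀ m ∈ Finset.Icc (k + 1) p,
        (C (α m) * X ^ m).coeff j = if m = j then α m else 0 := by
      intro m _
      rw [coeff_C_mul, coeff_X_pow]
      rcases eq_or_ne m j with h | h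
      · simp [h]
      · simp [h, h.symm, if_neg]
    rw [Finset.sum_congr rfl step, Finset.sum_ite_eq' (Finset.Icc (k + 1) p) j α]
  have hfl : ∀ j < k + 1, fp.coeff j = 0 := by
    intro j hj
    rw [hfpc, if_neg (by simp [Finset.mem_Icc]; omega)]
  have hfk : fp.coeff (k + 1) = α (k + 1) := by
    rw [hfpc, if_pos (by simp [Finset.mem_Icc]; omega)]
  have hdl : ∀ j < k, (derivative fp).coeff j = 0 := by
    intro j hj
    rw [coeff_derivative, hfl (j + 1) (by omega), zero_mul]
  have hdk : (derivative fp).coeff k = α (k + 1) * (k + 1) := by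
    rw [coeff_derivative, hfk]
  -- nP coefficients
  have hsq1 : ∀ j < 2 * k + 2, (fp ^ 2).coeff j = 0 := by
    have hdvd : (X : Polynomial ℝ) ^ (k + 1) ∣ fp := X_pow_dvd_iff.2 hfl
    have h2 : (X : Polynomial ℝ) ^ (2 * k + 2) ∣ fp ^ 2 := by
      have := pow_dvd_pow_of_dvd hdvd 2
      rwa [← pow_mul, show (k + 1) * 2 = 2 * k + 2 by ring] at this
    exact fun j hj => X_pow_dvd_iff.1 h2 j hj
  obtain ⟨s, hs⟩ := X_pow_dvd_iff.2 hdl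
  have hs0 : s.coeff 0 = (derivative fp).coeff k := by
    rw [hs]
    simpa using (coeff_X_pow_mul s k 0).symm
  have hsq2 : ∀ j < 2 * k, ((derivative fp) ^ 2).coeff j = 0 := by
    have h2 : (X : Polynomial ℝ) ^ (2 * k) ∣ (derivative fp) ^ 2 := by
      have := pow_dvd_pow_of_dvd (X_pow_dvd_iff.2 hdl) 2
      rwa [← pow_mul, show k * 2 = 2 * k by ring] at this
    exact fun j hj => X_pow_dvd_iff.1 h2 j hj
  have hc2k : ((derivative fp) ^ 2).coeff (2 * k) = (s.coeff 0) ^ 2 := by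
    rw [hs, mul_pow, ← pow_mul, show 2 * k = 0 + k * 2 by ring, coeff_X_pow_mul,
      show ((s ^ 2).coeff 0) = (s.coeff 0) ^ 2 by rw [sq, mul_coeff_zero, ← sq]]
  have hnl : ∀ j < 2 * k, nP.coeff j = 0 := by
    intro j hj
    rw [hnP, coeff_add, coeff_C_mul, coeff_C_mul, hsq1 j (by omega), hsq2 j hj]
    ring
  have hnk : nP.coeff (2 * k) ≠ 0 := by
    rw [hnP, coeff_add, coeff_C_mul, coeff_C_mul, hsq1 (2 * k) (by omega), hc2k, hs0, hdk]
    have hne : (α (k + 1) * ((k : ℝ) + 1)) ≠ 0 :=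
      mul_ne_zero hα (by positivity)
    have h2 : (0 : ℝ) < (α (k + 1) * ((k : ℝ) + 1)) ^ 2 :=
      lt_of_le_of_ne (sq_nonneg _) (Ne.symm (pow_ne_zero 2 hne))
    have : A * 0 + B * (α (k + 1) * ((k : ℝ) + 1)) ^ 2 > 0 := by
      rw [mul_zero, zero_add]
      exact mul_pos hBpos h2
    exact ne_of_gt this
  -- dP coefficients
  have hdl' : ∀ j < k + 1, dP.coeff j = 0 := by
    intro j hj
    rw [hdP, coeff_C_mul, hfl j hj, mul_zero]
  have hdk' : dP.coeff (k + 1) ≠ 0 := by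
    rw [hdP, coeff_C_mul, hfk]
    exact mul_ne_zero hg₁ hα
  -- conclude
  have hNum := aux_integral_eval_isTheta nP (2 * k) hnl hnk
  have hDen := aux_integral_eval_isTheta dP (k + 1) hdl' hdk'
  have hdiv := hNum.div hDen
  have hfe := funext key
  rw [hfe]
  refine hdiv.trans ?_
  have hev : (fun δ : ℝ => δ ^ (2 * k + 1) / δ ^ (k + 1 + 1))
      =ᶠ[𝓝[>] (0:ℝ)] (fun δ : ℝ => δ ^ ((k : ℤ) - 1)) := by
    filter_upwards [self_mem_nhdsWithin] with δ hδ
    have hδ0 : (δ : ℝ) ≠ 0 := ne_of_gt hδ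
    rw [← zpow_natCast δ (2 * k + 1), ← zpow_natCast δ (k + 1 + 1), ← zpow_sub₀ hδ0]
    congr 1
    push_cast
    ring
  exact hev.isTheta
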